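/- The rational map T(a,b,c) = ((1+a+ab)/(b(1+c+ac)), (1+b+bc)/(c(1+a+ab)), (1+c+ac)/(a(1+b+bc))) is an involution: T(T(a,b,c)) = (a,b,c) wherever both sides are defined. -/

import Mathlib

/-- The rational map realizing Okamoto's symmetry `w₂` on cluster X-coordinates. -/
def okamotoT {F : Type*} [Field F] (t : F × F × F) : F × F × F :=
  ⟨(1 + t.1 + t.1 * t.2.1) / (t.2.1 * (1 + t.2.2 + t.1 * t.2.2)),
   (1 + t.2.1 + t.2.1 * t.2.2) / (t.2.2 * (1 + t.1 + t.1 * t.2.1)),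
   (1 + t.2.2 + t.1 * t.2.2) / (t.1 * (1 + t.2.1 + t.2.1 * t.2.2))⟩

set_option maxHeartbeats 1000000 in
theorem stmt3 {F : Type*} [Field F] (a b c : F) (ha : a ≠ 0) (hb : b ≠ 0) (hc : c ≠ 0)
    (h1 : 1 + a + a * b ≠ 0) (h2 : 1 + b + b * c ≠ 0) (h3 : 1 + c + a * c ≠ 0)
    (ha' : (okamotoT (a, b, c)).1 ≠ 0) (hb' : (okamotoT (a, b, c)).2.1 ≠ 0)
    (hc' : (okamotoT (a, b, c)).2.2 ≠ 0)
    (h1' : 1 + (okamotoT (a, b, c)).1 + (okamotoT (a, b, c)).1 * (okamotoT (a, b, c)).2.1 ≠ 0)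
    (h2' : 1 + (okamotoT (a, b, c)).2.1 +
      (okamotoT (a, b, c)).2.1 * (okamotoT (a, b, c)).2.2 ≠ 0)
    (h3' : 1 + (okamotoT (a, b, c)).2.2 +
      (okamotoT (a, b, c)).1 * (okamotoT (a, b, c)).2.2 ≠ 0) :
    okamotoT (okamotoT (a, b, c)) = (a, b, c) := by
  have key : okamotoT (a, b, c) =
      ((1 + a + a*b)/(b*(1 + c + a*c)), (1 + b + b*c)/(c*(1 + a + a*b)),
       (1 + c + a*c)/(a*(1 + b + b*c))) := rfl
  rw [key] at h1' h2' h3' ⊢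
  simp only at h1' h2' h3'
  have e1 : 1 + (1 + a + a*b)/(b*(1 + c + a*c)) +
      (1 + a + a*b)/(b*(1 + c + a*c)) * ((1 + b + b*c)/(c*(1 + a + a*b))) =
      (b*c*(1 + c + a*c) + c*(1 + a + a*b) + (1 + b + b*c)) / (b*c*(1 + c + a*c)) := by
    field_simp
  have e2 : 1 + (1 + b + b*c)/(c*(1 + a + a*b)) +
      (1 + b + b*c)/(c*(1 + a + a*b)) * ((1 + c + a*c)/(a*(1 + b + b*c))) =
      (c*a*(1 + a + a*b) + a*(1 + b + b*c) + (1 + c + a*c)) / (c*a*(1 + a + a*b)) := by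
    have h1c : 1 + a + b * a ≠ 0 := by rwa [mul_comm b a]
    have h2c : 1 + b + c * b ≠ 0 := by rwa [mul_comm c b]
    have h3c : 1 + c + c * a ≠ 0 := by rwa [mul_comm c a]
    field_simp
  have e3 : 1 + (1 + c + a*c)/(a*(1 + b + b*c)) +
      (1 + a + a*b)/(b*(1 + c + a*c)) * ((1 + c + a*c)/(a*(1 + b + b*c))) =
      (a*b*(1 + b + b*c) + b*(1 + c + a*c) + (1 + a + a*b)) / (a*b*(1 + b + b*c)) := by
    have h1c : 1 + a + b * a ≠ 0 := by rwa [mul_comm b a]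
    have h2c : 1 + b + c * b ≠ 0 := by rwa [mul_comm c b]
    have h3c : 1 + c + c * a ≠ 0 := by rwa [mul_comm c a]
    field_simp
  rw [e1] at h1'; rw [e2] at h2'; rw [e3] at h3'
  have hP1 : b*c*(1 + c + a*c) + c*(1 + a + a*b) + (1 + b + b*c) ≠ 0 := by
    intro h; exact h1' (by rw [h, zero_div])
  have hP2 : c*a*(1 + a + a*b) + a*(1 + b + b*c) + (1 + c + a*c) ≠ 0 := by
    intro h; exact h2' (by rw [h, zero_div])
  have hP3 : a*b*(1 + b + b*c) + b*(1 + c + a*c) + (1 + a + a*b) ≠ 0 := by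
    intro h; exact h3' (by rw [h, zero_div])
  have h1c : 1 + a + b * a ≠ 0 := by rwa [mul_comm b a]
  have h2c : 1 + b + c * b ≠ 0 := by rwa [mul_comm c b]
  have h3c : 1 + c + c * a ≠ 0 := by rwa [mul_comm c a]
  simp only [okamotoT, Prod.mk.injEq]
  rw [e1, e2, e3]
  refine ⟨?_, ?_, ?_⟩
  · rw [div_eq_iff (by simp [*])]
    field_simp
    ring
  · rw [div_eq_iff (by simp [*])]
    field_simp
    ring
  · rw [div_eq_iff (by simp [*])]
    field_simp
    ring
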